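/- Let (sₖ)ₖ≥₁ be a sequence of positive integers with s₁ = 1, let (wᵢ)ᵢ≥₀ be a sequence in GL(2,ℂ) satisfying w_{i+1} = wᵢ^{s_{i+1}} w_{i-1} for all i ≥ 1, and let N ∈ GL(2,ℂ) with w₁w₀Nᵀ = w₀w₁N. Define Nₖ = N if k is even and Nₖ = Nᵀ if k is odd. Then for all k ≥ 1, w_{k-1} wₖ N_{k+1} = wₖ w_{k-1} Nₖ. -/
import Mathlib


open Matrix

theorem stmt1 (s : ℕ → ℕ) (hs : ∀ k, 1 ≤ k → 0 < s k) (hs1 : s 1 = 1)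
    (w : ℕ → Matrix (Fin 2) (Fin 2) ℂ) (hinv : ∀ i, IsUnit (w i).det)
    (hrec : ∀ i, 1 ≤ i → w (i + 1) = w i ^ s (i + 1) * w (i - 1))
    (N : Matrix (Fin 2) (Fin 2) ℂ) (hNinv : IsUnit N.det)
    (hN : w 1 * w 0 * Nᵀ = w 0 * w 1 * N) :
    ∀ k, 1 ≤ k →
      w (k - 1) * w k * (if Even (k + 1) then N else Nᵀ) =
        w k * w (k - 1) * (if Even k then N else Nᵀ) := by
  intro k hk
  induction k, hk using Nat.le_induction with
  | base => simpa using hN.symm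
  | succ n hn ih =>
    have h2 : Even (n + 1 + 1) ↔ Even n := by
      simp [Nat.even_add_one, not_not]
    rw [Nat.add_sub_cancel] at *
    rw [hrec n hn]
    calc w n * (w n ^ s (n + 1) * w (n - 1)) * (if Even (n + 1 + 1) then N else Nᵀ)
        = w n ^ s (n + 1) * w n * (w (n - 1) * (if Even n then N else Nᵀ)) := by
          rw [if_congr h2 rfl rfl, show w n * (w n ^ s (n + 1) * w (n - 1))
            = w n ^ s (n + 1) * w n * w (n - 1) from by
              rw [← mul_assoc, (Commute.self_pow (w n) _).eq], mul_assoc, mul_assoc]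
      _ = w n ^ s (n + 1) * (w n * w (n - 1) * (if Even n then N else Nᵀ)) := by
          noncomm_ring
      _ = w n ^ s (n + 1) * (w (n - 1) * w n * (if Even (n + 1) then N else Nᵀ)) := by
          rw [ih]
      _ = w n ^ s (n + 1) * w (n - 1) * w n * (if Even (n + 1) then N else Nᵀ) := by
          noncomm_ring
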